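/- Let 0 < σ < 1/2, let Ω be a nonempty bounded open convex subset of ℝ³, and let g : Γ₋ → ℝ be bounded and satisfy |g(X,ζ) − g(Y,ζ′)| ≤ M (|X−Y|² + |ζ−ζ′|²)^{σ/2} for all (X,ζ), (Y,ζ′) ∈ Γ₋. Define I(x,ζ) = g(p(x,ζ),ζ) e^{−ν(ζ)τ₋(x,ζ)} for x ∈ Ω, ζ ∈ ℝ³∖{0}. Then there is a constant C₉, depending only on sup|g|, M, Ω, γ and β₀, such that for all x, y ∈ Ω with dist(x,∂Ω) ≥ d₀ > 0 and dist(y,∂Ω) ≥ d₀, and all ζ ∈ ℝ³∖{0}: |I(x,ζ) − I(y,ζ)| ≤ C₉ (1+d₀⁻¹)^{2σ} |x−y|^σ. -/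

import Mathlib

open MeasureTheory Real Set
open scoped ENNReal NNReal

noncomputable section

/-- Three-dimensional Euclidean space. -/
abbrev E3 : Type := EuclideanSpace ℝ (Fin 3)

/-- Backward exit time: `τ₋(x,ζ) = sup{t ≥ 0 : x - sζ ∈ Ω for all s ∈ [0,t)}`. -/
def tauMinus (Ω : Set E3) (x ζ : E3) : ℝ :=
  sSup {t : ℝ | 0 ≤ t ∧ ∀ s ∈ Set.Ico (0 : ℝ) t, x - s • ζ ∈ Ω}

/-- Backward exit point: `p(x,ζ) = x - τ₋(x,ζ) ζ`. -/
def exitPoint (Ω : Set E3) (x ζ : E3) : E3 := x - tauMinus Ω x ζ • ζ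

/-- The incoming boundary set `Γ₋`. -/
def GammaMinus (Ω : Set E3) : Set (E3 × E3) :=
  {z | z.1 ∈ frontier Ω ∧ ∃ t : ℝ, 0 < t ∧ z.1 + t • z.2 ∈ Ω}

/-- Collision frequency `ν(ζ) = β₀ ∫ e^{-|η|²} |η-ζ|^γ dη`. -/
def nu (γ β₀ : ℝ) (ζ : E3) : ℝ :=
  β₀ * ∫ η : E3, Real.exp (-‖η‖ ^ 2) * ‖η - ζ‖ ^ γ

/-- The Grad-type pointwise bound (1.9) on the collision kernel `k`. -/
def KernelBound (γ δ C₁ : ℝ) (k : E3 → E3 → ℝ) : Prop :=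
  ∀ ζ ζs : E3, ζ ≠ ζs →
    |k ζ ζs| ≤ C₁ * ‖ζ - ζs‖⁻¹ * (1 + ‖ζ‖ + ‖ζs‖) ^ (-(1 - γ)) *
      Real.exp (-((1 - δ) / 4) *
        (‖ζ - ζs‖ ^ 2 + ((‖ζ‖ ^ 2 - ‖ζs‖ ^ 2) / ‖ζ - ζs‖) ^ 2))

/-- The gradient bound (1.10) on the collision kernel `k` (first-variable gradient),
together with differentiability of `k (·, ζ⁎)`. -/
def KernelGradBound (γ δ C₂ : ℝ) (k : E3 → E3 → ℝ) : Prop :=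
  (∀ ζs : E3, Differentiable ℝ fun ζ => k ζ ζs) ∧
  ∀ ζ ζs : E3, ζ ≠ ζs →
    ‖fderiv ℝ (fun w => k w ζs) ζ‖ ≤
      C₂ * (1 + ‖ζ‖) * (‖ζ - ζs‖ ^ 2)⁻¹ * (1 + ‖ζ‖ + ‖ζs‖) ^ (-(1 - γ)) *
        Real.exp (-((1 - δ) / 4) *
          (‖ζ - ζs‖ ^ 2 + ((‖ζ‖ ^ 2 - ‖ζs‖ ^ 2) / ‖ζ - ζs‖) ^ 2))

/-- The integral operator `K(f)(x,ζ) = ∫ k(ζ,ζ⁎) f(x,ζ⁎) dζ⁎`. -/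
def Kop (k : E3 → E3 → ℝ) (f : E3 → E3 → ℝ) (x ζ : E3) : ℝ :=
  ∫ ζs : E3, k ζ ζs * f x ζs

/-- `f` is a mild solution of the stationary linearized Boltzmann equation:
it satisfies the exponential (Duhamel) integral form along backward characteristics,
a.e. on `Ω × ℝ³`. -/
def MildSolution (Ω : Set E3) (γ β₀ : ℝ) (k f : E3 → E3 → ℝ) : Prop :=
  ∀ᵐ z : E3 × E3, z.1 ∈ Ω →
    f z.1 z.2 =
      f (exitPoint Ω z.1 z.2) z.2 * Real.exp (-(nu γ β₀ z.2) * tauMinus Ω z.1 z.2) +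
      ∫ s in (0 : ℝ)..(tauMinus Ω z.1 z.2),
        Real.exp (-(nu γ β₀ z.2) * s) * Kop k f (z.1 - s • z.2) z.2

/-- The function `G` from the mixture lemma, written as an integral over space
and speed:
`G(x₀,ζ) = ∫₀^∞ ∫_Ω k(ζ, ρ(x₀−y)/|x₀−y|) e^{−ν(ρ)|x₀−y|/ρ} K(f)(y, ρ(x₀−y)/|x₀−y|) ρ|x₀−y|⁻² dy dρ`. -/
def Gfun (Ω : Set E3) (γ β₀ : ℝ) (k f : E3 → E3 → ℝ) (x₀ ζ : E3) : ℝ :=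
  ∫ ρ in Set.Ioi (0 : ℝ), ∫ y in Ω,
    k ζ ((ρ / ‖x₀ - y‖) • (x₀ - y)) *
      Real.exp (-(nu γ β₀ ((ρ / ‖x₀ - y‖) • (x₀ - y))) * (‖x₀ - y‖ / ρ)) *
      Kop k f y ((ρ / ‖x₀ - y‖) • (x₀ - y)) * (ρ / ‖x₀ - y‖ ^ 2)

/-- The term `III(x,ζ) = ∫₀^{τ₋(x,ζ)} e^{−ν(ζ)s} G(x−ζs, ζ) ds`. -/
def IIIfun (Ω : Set E3) (γ β₀ : ℝ) (k f : E3 → E3 → ℝ) (x ζ : E3) : ℝ :=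
  ∫ s in (0 : ℝ)..(tauMinus Ω x ζ),
    Real.exp (-(nu γ β₀ ζ) * s) * Gfun Ω γ β₀ k f (x - s • ζ) ζ

/-- The damped transport of boundary data: `I(x,ζ) = g(p(x,ζ),ζ) e^{−ν(ζ)τ₋(x,ζ)}`. -/
def Ifun (Ω : Set E3) (γ β₀ : ℝ) (g : E3 → E3 → ℝ) (x ζ : E3) : ℝ :=
  g (exitPoint Ω x ζ) ζ * Real.exp (-(nu γ β₀ ζ) * tauMinus Ω x ζ)

/-- The twice-iterated boundary term
`II(x,ζ) = ∫₀^{τ₋(x,ζ)} ∫ e^{−ν(ζ)s} k(ζ,ζ′) e^{−ν(ζ′)τ₋(x−ζs,ζ′)} g(p(x−ζs,ζ′),ζ′) dζ′ ds`. -/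
def IIfun (Ω : Set E3) (γ β₀ : ℝ) (k g : E3 → E3 → ℝ) (x ζ : E3) : ℝ :=
  ∫ s in (0 : ℝ)..(tauMinus Ω x ζ), ∫ ζ' : E3,
    Real.exp (-(nu γ β₀ ζ) * s) * k ζ ζ' *
      Real.exp (-(nu γ β₀ ζ') * tauMinus Ω (x - s • ζ) ζ') *
      g (exitPoint Ω (x - s • ζ) ζ') ζ'

namespace Stmt13Aux

def S (Ω : Set E3) (x ζ : E3) : Set ℝ :=
  {t : ℝ | 0 ≤ t ∧ ∀ s ∈ Set.Ico (0 : ℝ) t, x - s • ζ ∈ Ω}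

theorem tau_eq (Ω : Set E3) (x ζ : E3) : tauMinus Ω x ζ = sSup (S Ω x ζ) := rfl

theorem zero_mem_S (Ω : Set E3) (x ζ : E3) : (0 : ℝ) ∈ S Ω x ζ :=
  ⟨le_refl 0, fun s hs => absurd hs.2 (not_lt.mpr hs.1)⟩

variable {Ω : Set E3} {x y ζ : E3}

variable {Ω : Set E3} {x y ζ : E3}

theorem mem_S_le (hbd : Bornology.IsBounded Ω) (hx : x ∈ Ω) (hζ : ζ ≠ 0)
    {t : ℝ} (ht : t ∈ S Ω x ζ) : t ≤ Metric.diam Ω / ‖ζ‖ := by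
  have hζ0 : 0 < ‖ζ‖ := norm_pos_iff.mpr hζ
  by_contra h
  push_neg at h
  have hd : 0 ≤ Metric.diam Ω / ‖ζ‖ := div_nonneg Metric.diam_nonneg hζ0.le
  obtain ⟨s, hs1, hs2⟩ := exists_between h
  have hmem : x - s • ζ ∈ Ω := ht.2 s ⟨hd.trans hs1.le, hs2⟩
  have hdist : dist x (x - s • ζ) ≤ Metric.diam Ω := Metric.dist_le_diam_of_mem hbd hx hmem
  rw [dist_eq_norm, sub_sub_cancel, norm_smul, Real.norm_eq_abs,
    abs_of_nonneg (hd.trans hs1.le)] at hdist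
  have : s ≤ Metric.diam Ω / ‖ζ‖ := (le_div_iff₀ hζ0).mpr hdist
  linarith

theorem bddAbove_S (hbd : Bornology.IsBounded Ω) (hx : x ∈ Ω) (hζ : ζ ≠ 0) :
    BddAbove (S Ω x ζ) :=
  ⟨Metric.diam Ω / ‖ζ‖, fun _ ht => mem_S_le hbd hx hζ ht⟩

theorem tau_nonneg (hbd : Bornology.IsBounded Ω) (hx : x ∈ Ω) (hζ : ζ ≠ 0) :
    0 ≤ tauMinus Ω x ζ :=
  le_csSup (bddAbove_S hbd hx hζ) (zero_mem_S Ω x ζ)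

theorem tau_le_diam (hbd : Bornology.IsBounded Ω) (hx : x ∈ Ω) (hζ : ζ ≠ 0) :
    tauMinus Ω x ζ ≤ Metric.diam Ω / ‖ζ‖ :=
  csSup_le ⟨0, zero_mem_S Ω x ζ⟩ fun _ ht => mem_S_le hbd hx hζ ht

theorem mem_of_lt_tau {s : ℝ} (hs0 : 0 ≤ s) (hs : s < tauMinus Ω x ζ) :
    x - s • ζ ∈ Ω := by
  obtain ⟨t, ht, hst⟩ := exists_lt_of_lt_csSup ⟨0, zero_mem_S Ω x ζ⟩ hs
  exact ht.2 s ⟨hs0, hst⟩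

theorem tau_pos (hbd : Bornology.IsBounded Ω) (hop : IsOpen Ω) (hx : x ∈ Ω) (hζ : ζ ≠ 0) :
    0 < tauMinus Ω x ζ := by
  obtain ⟨ε, hε, hball⟩ := Metric.isOpen_iff.mp hop x hx
  have hpos : 0 < ε / (‖ζ‖ + 1) := div_pos hε (by positivity)
  refine lt_of_lt_of_le hpos (le_csSup (bddAbove_S hbd hx hζ) ⟨hpos.le, fun s hs => ?_⟩)
  apply hball
  rw [Metric.mem_ball, dist_eq_norm, sub_sub_cancel_left, norm_neg, norm_smul,
    Real.norm_eq_abs, abs_of_nonneg hs.1]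
  calc s * ‖ζ‖ ≤ s * (‖ζ‖ + 1) := by nlinarith [hs.1, norm_nonneg ζ]
    _ < ε / (‖ζ‖ + 1) * (‖ζ‖ + 1) := by
        apply mul_lt_mul_of_pos_right hs.2; positivity
    _ = ε := by field_simp

theorem tau_ge_of_ball {d : ℝ} (hbd : Bornology.IsBounded Ω) (hx : x ∈ Ω) (hζ : ζ ≠ 0)
    (hball : Metric.ball x d ⊆ Ω) : d / ‖ζ‖ ≤ tauMinus Ω x ζ := by
  have hζ0 : 0 < ‖ζ‖ := norm_pos_iff.mpr hζ
  rcases le_or_gt d 0 with hd | hd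
  · exact le_trans (div_nonpos_of_nonpos_of_nonneg hd hζ0.le) (tau_nonneg hbd hx hζ)
  refine le_csSup (bddAbove_S hbd hx hζ) ⟨by positivity, fun s hs => hball ?_⟩
  rw [Metric.mem_ball, dist_eq_norm, sub_sub_cancel_left, norm_neg, norm_smul,
    Real.norm_eq_abs, abs_of_nonneg hs.1]
  exact (lt_div_iff₀ hζ0).mp hs.2

theorem exit_not_mem (hbd : Bornology.IsBounded Ω) (hop : IsOpen Ω) (hx : x ∈ Ω) (hζ : ζ ≠ 0) :
    exitPoint Ω x ζ ∉ Ω := by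
  intro hmem
  set τ := tauMinus Ω x ζ with hτ
  obtain ⟨ε, hε, hball⟩ := Metric.isOpen_iff.mp hop _ hmem
  have hδ : 0 < ε / (‖ζ‖ + 1) := div_pos hε (by positivity)
  have hSmem : τ + ε / (‖ζ‖ + 1) ∈ S Ω x ζ := by
    refine ⟨by nlinarith [tau_nonneg hbd hx hζ], fun s hs => ?_⟩
    rcases lt_or_ge s τ with h | h
    · exact mem_of_lt_tau hs.1 h
    · apply hball
      rw [Metric.mem_ball, dist_eq_norm]
      have : x - s • ζ - exitPoint Ω x ζ = -((s - τ) • ζ) := by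
        simp only [exitPoint, ← hτ]
        rw [sub_smul]; abel
      rw [this, norm_neg, norm_smul, Real.norm_eq_abs, abs_of_nonneg (by linarith)]
      calc (s - τ) * ‖ζ‖ ≤ (s - τ) * (‖ζ‖ + 1) := by nlinarith [norm_nonneg ζ]
        _ < ε / (‖ζ‖ + 1) * (‖ζ‖ + 1) := by
            apply mul_lt_mul_of_pos_right (by linarith [hs.2]); positivity
        _ = ε := by field_simp
  have h2 : τ + ε / (‖ζ‖ + 1) ≤ τ := le_csSup (bddAbove_S hbd hx hζ) hSmem
  linarith

theorem exit_mem_closure (hbd : Bornology.IsBounded Ω) (hop : IsOpen Ω) (hx : x ∈ Ω)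
    (hζ : ζ ≠ 0) : exitPoint Ω x ζ ∈ closure Ω := by
  set τ := tauMinus Ω x ζ with hτ
  have hτ0 : 0 < τ := tau_pos hbd hop hx hζ
  have hcont : ContinuousWithinAt (fun s : ℝ => x - s • ζ) (Set.Ico 0 τ) τ :=
    (Continuous.continuousWithinAt (by fun_prop))
  have hmem : τ ∈ closure (Set.Ico (0 : ℝ) τ) := by
    rw [closure_Ico hτ0.ne]
    exact Set.right_mem_Icc.mpr hτ0.le
  have := hcont.mem_closure_image hmem
  refine closure_mono ?_ this
  rintro _ ⟨s, hs, rfl⟩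
  exact mem_of_lt_tau hs.1 hs.2

theorem exit_mem_frontier (hbd : Bornology.IsBounded Ω) (hop : IsOpen Ω) (hx : x ∈ Ω)
    (hζ : ζ ≠ 0) : exitPoint Ω x ζ ∈ frontier Ω := by
  rw [hop.frontier_eq]
  exact ⟨exit_mem_closure hbd hop hx hζ, exit_not_mem hbd hop hx hζ⟩

theorem exit_mem_Gamma (hbd : Bornology.IsBounded Ω) (hop : IsOpen Ω) (hx : x ∈ Ω)
    (hζ : ζ ≠ 0) : (exitPoint Ω x ζ, ζ) ∈ GammaMinus Ω := by
  refine ⟨exit_mem_frontier hbd hop hx hζ, tauMinus Ω x ζ, tau_pos hbd hop hx hζ, ?_⟩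
  show exitPoint Ω x ζ + tauMinus Ω x ζ • ζ ∈ Ω
  rw [exitPoint, sub_add_cancel]
  exact hx

theorem ball_subset (hbd : Bornology.IsBounded Ω) (hop : IsOpen Ω) (hx : x ∈ Ω) {d : ℝ}
    (hd : 0 < d) (hdist : d ≤ Metric.infDist x (frontier Ω)) : Metric.ball x d ⊆ Ω := by
  intro v hv
  by_contra hvΩ
  have hne : x - v ≠ 0 := sub_ne_zero.mpr fun h => hvΩ (h ▸ hx)
  have hτ1 : tauMinus Ω x (x - v) ≤ 1 := by
    refine csSup_le ⟨0, zero_mem_S _ _ _⟩ fun t ht => ?_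
    by_contra h
    push_neg at h
    exact hvΩ (by simpa using ht.2 1 ⟨zero_le_one, h⟩)
  have hfront := exit_mem_frontier hbd hop hx hne
  have h1 : Metric.infDist x (frontier Ω) ≤ dist x (exitPoint Ω x (x - v)) :=
    Metric.infDist_le_dist_of_mem hfront
  have h2 : dist x (exitPoint Ω x (x - v)) = tauMinus Ω x (x - v) * ‖x - v‖ := by
    rw [exitPoint, dist_eq_norm, sub_sub_cancel, norm_smul, Real.norm_eq_abs,
      abs_of_nonneg (tau_nonneg hbd hx hne)]
  have h3 : ‖x - v‖ < d := by
    rw [← dist_eq_norm, dist_comm]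
    exact hv
  nlinarith [tau_nonneg hbd hx hne, norm_nonneg (x - v)]

theorem tau_sub_le (hbd : Bornology.IsBounded Ω) (hconv : Convex ℝ Ω)
    (hx : x ∈ Ω) (hy : y ∈ Ω) (hζ : ζ ≠ 0) (hxy : x ≠ y) {d : ℝ} (hd : 0 < d)
    (hby : Metric.ball y d ⊆ Ω) :
    tauMinus Ω x ζ - tauMinus Ω y ζ ≤ 2 * Metric.diam Ω * ‖x - y‖ / (d * ‖ζ‖) := by
  have hζ0 : 0 < ‖ζ‖ := norm_pos_iff.mpr hζ
  set r := ‖x - y‖ with hr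
  have hr0 : 0 < r := by rw [hr]; exact norm_pos_iff.mpr (sub_ne_zero.mpr hxy)
  set τx := tauMinus Ω x ζ with hτx
  have hτx0 : 0 ≤ τx := tau_nonneg hbd hx hζ
  set lam : ℝ := 2 * r / (d + 2 * r) with hlam
  have hA : 0 < d + 2 * r := by linarith
  have hlam0 : 0 < lam := by positivity
  have hlam1 : lam < 1 := by rw [hlam, div_lt_one hA]; linarith
  have h1m : 1 - lam = d / (d + 2 * r) := by rw [hlam]; field_simp; ring
  have h1m0 : 0 < 1 - lam := by linarith
  -- membership of (1-lam) * τx in S Ω y ζ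
  have hSmem : (1 - lam) * τx ∈ S Ω y ζ := by
    refine ⟨by positivity, fun s hs => ?_⟩
    have hu : x - (s / (1 - lam)) • ζ ∈ Ω := by
      refine mem_of_lt_tau (div_nonneg hs.1 h1m0.le) ?_
      rw [div_lt_iff₀ h1m0]
      calc s < (1 - lam) * τx := hs.2
        _ = τx * (1 - lam) := by ring
    have hv : y + ((1 - lam) / lam) • (y - x) ∈ Ω := by
      apply hby
      rw [Metric.mem_ball, dist_eq_norm, add_sub_cancel_left, norm_smul, Real.norm_eq_abs,
        abs_of_nonneg (by positivity), norm_sub_rev, ← hr]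
      have hq : (1 - lam) / lam = d / (2 * r) := by
        rw [h1m, hlam]
        field_simp
      have hq2 : d / (2 * r) * r = d / 2 := by field_simp
      rw [hq, hq2]
      linarith
    have hc := hconv hu hv h1m0.le hlam0.le (by ring)
    have heq : (1 - lam) • (x - (s / (1 - lam)) • ζ) + lam • (y + ((1 - lam) / lam) • (y - x))
        = y - s • ζ := by
      match_scalars <;> field_simp <;> ring
    rwa [heq] at hc
  have hτy : (1 - lam) * τx ≤ tauMinus Ω y ζ := le_csSup (bddAbove_S hbd hy hζ) hSmem
  have hstep : τx - tauMinus Ω y ζ ≤ lam * τx := by linarith [hτy]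
  have hτxd : τx ≤ Metric.diam Ω / ‖ζ‖ := tau_le_diam hbd hx hζ
  calc τx - tauMinus Ω y ζ ≤ lam * τx := hstep
    _ ≤ (2 * r / d) * (Metric.diam Ω / ‖ζ‖) := by
        apply mul_le_mul _ hτxd hτx0 (by positivity)
        rw [hlam]
        apply div_le_div_of_nonneg_left (by positivity) hd (by linarith)
    _ = 2 * Metric.diam Ω * r / (d * ‖ζ‖) := by field_simp

theorem exp_aux {σ u : ℝ} (hσ0 : 0 < σ) (hσ1 : σ ≤ 1) (hu : 0 ≤ u) :
    1 - Real.exp (-u) ≤ u ^ σ := by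
  rcases le_or_gt u 1 with h | h
  · rcases eq_or_lt_of_le hu with rfl | hu0
    · simpa using Real.rpow_nonneg le_rfl σ
    calc 1 - Real.exp (-u) ≤ u := by nlinarith [Real.add_one_le_exp (-u)]
      _ = u ^ (1:ℝ) := (Real.rpow_one u).symm
      _ ≤ u ^ σ := Real.rpow_le_rpow_of_exponent_ge hu0 h hσ1
  · calc 1 - Real.exp (-u) ≤ 1 := by linarith [Real.exp_pos (-u)]
      _ = (1:ℝ) ^ σ := (Real.one_rpow σ).symm
      _ ≤ u ^ σ := Real.rpow_le_rpow zero_le_one h.le hσ0.le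

theorem exp_sub_exp_le {σ a b c : ℝ} (hσ0 : 0 < σ) (hσ1 : σ ≤ 1)
    (hca : c ≤ a) (hab : a ≤ b) :
    Real.exp (-a) - Real.exp (-b) ≤ Real.exp (-c) * (b - a) ^ σ := by
  have h1 : Real.exp (-a) - Real.exp (-b) = Real.exp (-a) * (1 - Real.exp (-(b - a))) := by
    rw [mul_sub, mul_one, ← Real.exp_add]
    ring_nf
  rw [h1]
  have h2 : 1 - Real.exp (-(b - a)) ≤ (b - a) ^ σ := exp_aux hσ0 hσ1 (by linarith)
  have h3 : Real.exp (-a) ≤ Real.exp (-c) := Real.exp_le_exp.mpr (by linarith)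
  have h4 : 0 ≤ 1 - Real.exp (-(b - a)) := by
    have : Real.exp (-(b - a)) ≤ 1 := Real.exp_le_one_iff.mpr (by linarith)
    linarith
  exact mul_le_mul h3 h2 h4 (Real.exp_pos _).le

theorem abs_exp_sub_exp {σ a b c : ℝ} (hσ0 : 0 < σ) (hσ1 : σ ≤ 1)
    (hca : c ≤ a) (hcb : c ≤ b) :
    |Real.exp (-a) - Real.exp (-b)| ≤ Real.exp (-c) * |a - b| ^ σ := by
  rcases le_total a b with h | h
  · rw [abs_of_nonneg (sub_nonneg.mpr (Real.exp_le_exp.mpr (neg_le_neg h))),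
      abs_sub_comm, abs_of_nonneg (sub_nonneg.mpr h)]
    exact exp_sub_exp_le hσ0 hσ1 hca h
  · rw [abs_sub_comm, abs_of_nonneg (sub_nonneg.mpr (Real.exp_le_exp.mpr (neg_le_neg h))),
      abs_of_nonneg (sub_nonneg.mpr h)]
    exact exp_sub_exp_le hσ0 hσ1 hcb h

theorem exp_mul_rpow_le_one {σ c : ℝ} (hσ0 : 0 < σ) (hσ1 : σ ≤ 1) (hc : 0 ≤ c) :
    Real.exp (-c) * c ^ σ ≤ 1 := by
  have h : c ^ σ ≤ Real.exp c := by
    rcases le_or_gt c 1 with h | h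
    · calc c ^ σ ≤ 1 := Real.rpow_le_one hc h hσ0.le
        _ ≤ Real.exp c := by nlinarith [Real.add_one_le_exp c]
    · calc c ^ σ ≤ c ^ (1:ℝ) := Real.rpow_le_rpow_of_exponent_le h.le hσ1
        _ = c := Real.rpow_one c
        _ ≤ Real.exp c := by nlinarith [Real.add_one_le_exp c]
  calc Real.exp (-c) * c ^ σ ≤ Real.exp (-c) * Real.exp c := by
        apply mul_le_mul_of_nonneg_left h (Real.exp_pos _).le
    _ = 1 := by rw [← Real.exp_add]; simp

end Stmt13Aux

set_option maxHeartbeats 2000000 in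
/-- Space-regularity of the damped transport `I` of Hölder boundary data
(estimate (4.2) of Proposition 4.1). -/
theorem stmt_13 (σ : ℝ) (hσ₀ : 0 < σ) (hσ₁ : σ < 1 / 2)
    (Ω : Set E3) (hne : Ω.Nonempty) (hbd : Bornology.IsBounded Ω)
    (hop : IsOpen Ω) (hconv : Convex ℝ Ω)
    (γ β₀ : ℝ) (hγ₀ : 0 ≤ γ) (hγ₁ : γ < 1) (hβ₀ : 0 < β₀)
    (M B : ℝ) (hM : 0 < M) (hB : 0 ≤ B) :
    ∃ C₉ : ℝ, 0 < C₉ ∧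
      ∀ g : E3 → E3 → ℝ,
        (∀ z ∈ GammaMinus Ω, |g z.1 z.2| ≤ B) →
        (∀ z ∈ GammaMinus Ω, ∀ w ∈ GammaMinus Ω,
          |g z.1 z.2 - g w.1 w.2| ≤
            M * (‖z.1 - w.1‖ ^ 2 + ‖z.2 - w.2‖ ^ 2) ^ (σ / 2)) →
        ∀ d₀ : ℝ, 0 < d₀ → ∀ x ∈ Ω, ∀ y ∈ Ω,
          d₀ ≤ Metric.infDist x (frontier Ω) →
          d₀ ≤ Metric.infDist y (frontier Ω) →
          ∀ ζ : E3, ζ ≠ 0 →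
            |Ifun Ω γ β₀ g x ζ - Ifun Ω γ β₀ g y ζ| ≤
              C₉ * (1 + d₀⁻¹) ^ (2 * σ) * ‖x - y‖ ^ σ := by
  classical
  have hD0 : (0:ℝ) ≤ Metric.diam Ω := Metric.diam_nonneg
  set A : ℝ := 1 + 2 * Metric.diam Ω with hA
  have hA1 : (1:ℝ) ≤ A := by simp only [hA]; linarith
  clear_value A
  have hσ1' : σ ≤ 1 := by linarith
  refine ⟨(M + B) * A, by nlinarith, ?_⟩
  intro g hgB hgH d₀ hd₀ x hx y hy hdx hdy ζ hζ
  have hζ0 : 0 < ‖ζ‖ := norm_pos_iff.mpr hζ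
  set e : ℝ := d₀⁻¹ with he
  have he0 : 0 < e := by positivity
  set r : ℝ := ‖x - y‖ with hr
  have hr0 : 0 ≤ r := norm_nonneg _
  set P : ℝ := A * (1 + e) ^ 2 * r with hP
  have hP0 : 0 ≤ P := by positivity
  set ν : ℝ := nu γ β₀ ζ with hνdef
  have hν0 : 0 ≤ ν := by
    rw [hνdef, nu]
    refine mul_nonneg hβ₀.le (MeasureTheory.integral_nonneg fun η => ?_)
    exact mul_nonneg (Real.exp_pos _).le (Real.rpow_nonneg (norm_nonneg _) γ)
  have hbx : Metric.ball x d₀ ⊆ Ω := Stmt13Aux.ball_subset hbd hop hx hd₀ hdx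
  have hby : Metric.ball y d₀ ⊆ Ω := Stmt13Aux.ball_subset hbd hop hy hd₀ hdy
  set τx : ℝ := tauMinus Ω x ζ with hτxdef
  set τy : ℝ := tauMinus Ω y ζ with hτydef
  have hτx0 : 0 ≤ τx := Stmt13Aux.tau_nonneg hbd hx hζ
  have hτy0 : 0 ≤ τy := Stmt13Aux.tau_nonneg hbd hy hζ
  have hτxd : d₀ / ‖ζ‖ ≤ τx := Stmt13Aux.tau_ge_of_ball hbd hx hζ hbx
  have hτyd : d₀ / ‖ζ‖ ≤ τy := Stmt13Aux.tau_ge_of_ball hbd hy hζ hby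
  -- Lipschitz estimate for τ
  have hτlip : |τx - τy| ≤ 2 * Metric.diam Ω * r / (d₀ * ‖ζ‖) := by
    by_cases hxy : x = y
    · subst hxy
      simp only [hτxdef, hτydef, sub_self, abs_zero]
      positivity
    · rw [abs_sub_le_iff]
      constructor
      · exact Stmt13Aux.tau_sub_le hbd hconv hx hy hζ hxy hd₀ hby
      · have h := Stmt13Aux.tau_sub_le hbd hconv hy hx hζ (Ne.symm hxy) hd₀ hbx
        rwa [norm_sub_rev] at h
  set px : E3 := exitPoint Ω x ζ with hpx
  set py : E3 := exitPoint Ω y ζ with hpy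
  have hΓx : (px, ζ) ∈ GammaMinus Ω := Stmt13Aux.exit_mem_Gamma hbd hop hx hζ
  have hΓy : (py, ζ) ∈ GammaMinus Ω := Stmt13Aux.exit_mem_Gamma hbd hop hy hζ
  clear_value e r P ν τx τy px py
  -- bound on ‖px - py‖
  have hpdiff : ‖px - py‖ ≤ P := by
    have h1 : px - py = (x - y) - (τx - τy) • ζ := by
      rw [hpx, hpy, exitPoint, exitPoint, sub_smul, ← hτxdef, ← hτydef]
      abel
    have h2 : ‖px - py‖ ≤ r + |τx - τy| * ‖ζ‖ := by
      rw [h1]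
      calc ‖(x - y) - (τx - τy) • ζ‖ ≤ ‖x - y‖ + ‖(τx - τy) • ζ‖ := norm_sub_le _ _
        _ = r + |τx - τy| * ‖ζ‖ := by rw [norm_smul, Real.norm_eq_abs, hr]
    have h3 : |τx - τy| * ‖ζ‖ ≤ 2 * Metric.diam Ω * r / d₀ := by
      calc |τx - τy| * ‖ζ‖ ≤ 2 * Metric.diam Ω * r / (d₀ * ‖ζ‖) * ‖ζ‖ :=
            mul_le_mul_of_nonneg_right hτlip hζ0.le
        _ = 2 * Metric.diam Ω * r / d₀ := by field_simp
    have h4 : 2 * Metric.diam Ω * r / d₀ = 2 * Metric.diam Ω * r * e := by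
      rw [he, div_eq_mul_inv]
    rw [hP]
    have hDre : 0 ≤ 2 * Metric.diam Ω * r * e := by positivity
    nlinarith [mul_nonneg (mul_nonneg hr0 he0.le) he0.le, mul_nonneg hr0 he0.le,
      mul_nonneg (mul_nonneg hD0 hr0) (mul_nonneg he0.le he0.le),
      mul_nonneg hD0 hr0]
  -- Hölder estimate on g
  have hg1 : |g px ζ - g py ζ| ≤ M * ‖px - py‖ ^ σ := by
    have h := hgH (px, ζ) hΓx (py, ζ) hΓy
    simp only [sub_self, norm_zero] at h
    have h2 : ((‖px - py‖ ^ 2 + 0 ^ 2 : ℝ)) ^ (σ / 2) = ‖px - py‖ ^ σ := by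
      rw [show ((0:ℝ) ^ 2) = 0 by norm_num, add_zero, ← Real.rpow_natCast ‖px - py‖ 2,
        ← Real.rpow_mul (norm_nonneg _)]
      congr 1
      push_cast
      ring
    rwa [h2] at h
  have hgP : |g px ζ - g py ζ| ≤ M * P ^ σ :=
    le_trans hg1 (mul_le_mul_of_nonneg_left
      (Real.rpow_le_rpow (norm_nonneg _) hpdiff hσ₀.le) hM.le)
  -- exponential estimate
  set c : ℝ := ν * (d₀ / ‖ζ‖) with hcdef
  have hc0 : 0 ≤ c := mul_nonneg hν0 (by positivity)
  have hexp : |Real.exp (-(ν * τx)) - Real.exp (-(ν * τy))| ≤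
      Real.exp (-c) * |ν * τx - ν * τy| ^ σ :=
    Stmt13Aux.abs_exp_sub_exp hσ₀ hσ1' (mul_le_mul_of_nonneg_left hτxd hν0)
      (mul_le_mul_of_nonneg_left hτyd hν0)
  clear_value c
  have habP : |ν * τx - ν * τy| ≤ c * P := by
    have h1 : |ν * τx - ν * τy| = ν * |τx - τy| := by
      rw [← mul_sub, abs_mul, abs_of_nonneg hν0]
    have h2 : ν * (2 * Metric.diam Ω * r / (d₀ * ‖ζ‖)) = c * (2 * Metric.diam Ω * r * e ^ 2) := by
      rw [hcdef, he]
      field_simp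
    have h3 : 2 * Metric.diam Ω * r * e ^ 2 ≤ P := by
      rw [hP]
      nlinarith [mul_nonneg (mul_nonneg hr0 he0.le) he0.le, mul_nonneg hr0 he0.le,
        mul_nonneg (mul_nonneg hD0 hr0) (mul_nonneg he0.le he0.le), mul_nonneg hD0 hr0,
        mul_nonneg hr0 (mul_nonneg he0.le he0.le)]
    calc |ν * τx - ν * τy| = ν * |τx - τy| := h1
      _ ≤ ν * (2 * Metric.diam Ω * r / (d₀ * ‖ζ‖)) := mul_le_mul_of_nonneg_left hτlip hν0
      _ = c * (2 * Metric.diam Ω * r * e ^ 2) := h2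
      _ ≤ c * P := mul_le_mul_of_nonneg_left h3 hc0
  have hexp2 : |Real.exp (-(ν * τx)) - Real.exp (-(ν * τy))| ≤ P ^ σ := by
    calc |Real.exp (-(ν * τx)) - Real.exp (-(ν * τy))|
        ≤ Real.exp (-c) * |ν * τx - ν * τy| ^ σ := hexp
      _ ≤ Real.exp (-c) * (c * P) ^ σ := mul_le_mul_of_nonneg_left
          (Real.rpow_le_rpow (abs_nonneg _) habP hσ₀.le) (Real.exp_pos _).le
      _ = (Real.exp (-c) * c ^ σ) * P ^ σ := by
          rw [Real.mul_rpow hc0 hP0]; ring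
      _ ≤ 1 * P ^ σ := mul_le_mul_of_nonneg_right
          (Stmt13Aux.exp_mul_rpow_le_one hσ₀ hσ1' hc0) (Real.rpow_nonneg hP0 σ)
      _ = P ^ σ := one_mul _
  -- split I(x) - I(y)
  have hIx : Ifun Ω γ β₀ g x ζ = g px ζ * Real.exp (-(ν * τx)) := by
    rw [Ifun, neg_mul, hpx, hτxdef, hνdef]
  have hIy : Ifun Ω γ β₀ g y ζ = g py ζ * Real.exp (-(ν * τy)) := by
    rw [Ifun, neg_mul, hpy, hτydef, hνdef]
  have hsplit : Ifun Ω γ β₀ g x ζ - Ifun Ω γ β₀ g y ζ =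
      (g px ζ - g py ζ) * Real.exp (-(ν * τx)) +
        g py ζ * (Real.exp (-(ν * τx)) - Real.exp (-(ν * τy))) := by
    rw [hIx, hIy]; ring
  have hexpx1 : Real.exp (-(ν * τx)) ≤ 1 :=
    Real.exp_le_one_iff.mpr (neg_nonpos.mpr (mul_nonneg hν0 hτx0))
  have hmain : |Ifun Ω γ β₀ g x ζ - Ifun Ω γ β₀ g y ζ| ≤ (M + B) * P ^ σ := by
    rw [hsplit]
    calc |(g px ζ - g py ζ) * Real.exp (-(ν * τx)) +
        g py ζ * (Real.exp (-(ν * τx)) - Real.exp (-(ν * τy)))|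
        ≤ |(g px ζ - g py ζ) * Real.exp (-(ν * τx))| +
          |g py ζ * (Real.exp (-(ν * τx)) - Real.exp (-(ν * τy)))| := abs_add_le _ _
      _ = |g px ζ - g py ζ| * Real.exp (-(ν * τx)) +
          |g py ζ| * |Real.exp (-(ν * τx)) - Real.exp (-(ν * τy))| := by
          rw [abs_mul, abs_mul, abs_of_nonneg (Real.exp_pos _).le]
      _ ≤ (M * P ^ σ) * 1 + B * P ^ σ := by
          apply add_le_add
          · exact mul_le_mul hgP hexpx1 (Real.exp_pos _).le
              (by positivity)
          · exact mul_le_mul (hgB (py, ζ) hΓy) hexp2 (abs_nonneg _) hB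
      _ = (M + B) * P ^ σ := by ring
  -- convert P^σ
  have hPσ : P ^ σ ≤ A * (1 + e) ^ (2 * σ) * r ^ σ := by
    have h1 : P ^ σ = A ^ σ * ((1 + e) ^ 2) ^ σ * r ^ σ := by
      rw [hP, Real.mul_rpow (by positivity) hr0, Real.mul_rpow (by positivity) (by positivity)]
    have h2 : ((1 + e) ^ 2 : ℝ) ^ σ = (1 + e) ^ (2 * σ) := by
      rw [← Real.rpow_natCast (1 + e) 2, ← Real.rpow_mul (by positivity)]
      norm_num
    have h3 : A ^ σ ≤ A := by
      calc A ^ σ ≤ A ^ (1:ℝ) := Real.rpow_le_rpow_of_exponent_le hA1 hσ1'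
        _ = A := Real.rpow_one A
    rw [h1, h2]
    have h4 : 0 ≤ (1 + e) ^ (2 * σ) := Real.rpow_nonneg (by positivity) _
    have h5 : 0 ≤ r ^ σ := Real.rpow_nonneg hr0 _
    nlinarith [Real.rpow_nonneg (le_trans zero_le_one hA1) σ, mul_nonneg h4 h5]
  calc |Ifun Ω γ β₀ g x ζ - Ifun Ω γ β₀ g y ζ| ≤ (M + B) * P ^ σ := hmain
    _ ≤ (M + B) * (A * (1 + e) ^ (2 * σ) * r ^ σ) :=
        mul_le_mul_of_nonneg_left hPσ (by linarith)
    _ = (M + B) * A * (1 + e) ^ (2 * σ) * r ^ σ := by ring
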